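/- arXiv:1202.4101 — 3 statements merged into one kernel-verified Lean document; each statement's English description precedes it below -/
import Mathlib

section
/- Let S be a nonnegative nondecreasing jump function on [0,∞) with jumps γ_{x_i} at countably many points x_i, and let S^ε be approximations with jumps γ^ε_{x_i^ε} at points x_i^ε, such that S^ε_R → S_R and, for an enumeration with γ_{x_1} ≥ γ_{x_2} ≥ …, there exists m(ε) → ∞ with sup_{1≤i≤m} |x_i^ε − x_i| → 0 and m · sup_{1≤i≤m} |γ^ε_{x_i^ε} − γ_{x_i}| → 0 as ε → 0. Then for every η > 0, every 1 ≤ k ≤ m(ε), and all sufficiently small ε, the tail sums satisfy ∑_{i>k} γ^ε_{x_i^ε} ≤ ∑_{i>k} γ_{x_i} + 2η. -/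
open Filter Set Topology

/-- tail-sum comparison for the jump sizes of approximating
nonnegative nondecreasing jump functions.  The jump sizes `γ` (resp. `γε ε`)
are enumerated so that `γ` is nonincreasing; `S^ε_R = ∑' i, γε ε i` converges
to `S_R = ∑' i, γ i`; `m ε → ∞` with the uniform closeness of locations and
(size-weighted) jump sizes; and `S_{R+δ'} − S_R < η`.  Then eventually in `ε`,
for every `1 ≤ k ≤ m ε`, `∑_{i>k} γε ε i ≤ ∑_{i>k} γ i + 2η`. -/
theorem stmt0
    (γ : ℕ → ℝ) (γε : ℝ → ℕ → ℝ) (x : ℕ → ℝ) (xε : ℝ → ℕ → ℝ)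
    (R δ' η SRδ : ℝ) (m : ℝ → ℕ)
    (hγpos : ∀ i, 0 < γ i) (hγεpos : ∀ ε i, 0 < γε ε i)
    (hanti : Antitone γ)
    (hx : ∀ i, x i ∈ Set.Icc 0 R) (hxε : ∀ ε i, xε ε i ∈ Set.Icc 0 R)
    (hsum : Summable γ) (hsumε : ∀ ε, Summable (γε ε))
    (hη : 0 < η) (hδ' : 0 < δ')
    -- `S_{R+δ'} − S_R < η`, with `S_R = ∑' i, γ i`:
    (hSRδle : ∑' i, γ i ≤ SRδ)
    (hjump : SRδ - ∑' i, γ i < η)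
    -- `S^ε_R → S_{R+δ'}`-type control: in fact `S^ε_R ≤ S_{R+δ'}` eventually
    -- follows from `S^ε_R → S_R`; we assume the convergence itself:
    (hconv : Tendsto (fun ε => ∑' i, γε ε i) (𝓝[>] (0 : ℝ)) (𝓝 (∑' i, γ i)))
    (hm : Tendsto m (𝓝[>] (0 : ℝ)) atTop)
    (hclose : ∀ η' > (0 : ℝ), ∀ᶠ ε in 𝓝[>] (0 : ℝ),
      ∀ i < m ε, |xε ε i - x i| < η' ∧ (m ε : ℝ) * |γε ε i - γ i| < η') :
    ∀ᶠ ε in 𝓝[>] (0 : ℝ), ∀ k, 1 ≤ k → k ≤ m ε →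
      ∑' i, γε ε (i + k) ≤ (∑' i, γ (i + k)) + 2 * η := by
  have hconv' : ∀ᶠ ε in 𝓝[>] (0 : ℝ), |∑' i, γε ε i - ∑' i, γ i| < η := by
    have := Metric.tendsto_nhds.mp hconv η hη
    simpa [Real.dist_eq] using this
  filter_upwards [hconv', hclose η hη] with ε h1 h2
  intro k hk1 hk2
  have hmpos : 0 < (m ε : ℝ) := by
    have : 1 ≤ m ε := le_trans hk1 hk2
    exact_mod_cast lt_of_lt_of_le Nat.one_pos this
  have hS1 : ∑ i ∈ Finset.range k, γε ε i + ∑' i, γε ε (i + k) = ∑' i, γε ε i :=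
    Summable.sum_add_tsum_nat_add' ((summable_nat_add_iff k).mpr (hsumε ε))
  have hS2 : ∑ i ∈ Finset.range k, γ i + ∑' i, γ (i + k) = ∑' i, γ i :=
    Summable.sum_add_tsum_nat_add' ((summable_nat_add_iff k).mpr hsum)
  have h1' : ∑' i, γε ε i - ∑' i, γ i < η := (abs_lt.mp h1).2
  have hbound : ∑ i ∈ Finset.range k, γ i - ∑ i ∈ Finset.range k, γε ε i ≤ η := by
    rw [← Finset.sum_sub_distrib]
    calc ∑ i ∈ Finset.range k, (γ i - γε ε i)
        ≤ ∑ i ∈ Finset.range k, (η / (m ε : ℝ)) := by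
          apply Finset.sum_le_sum
          intro i hi
          have hi' := (h2 i (lt_of_lt_of_le (Finset.mem_range.mp hi) hk2)).2
          have habs : |γε ε i - γ i| ≤ η / (m ε : ℝ) := by
            rw [le_div_iff₀ hmpos]
            linarith [hi']
          have := neg_abs_le (γε ε i - γ i)
          linarith [habs, this]
      _ = (k : ℝ) * (η / (m ε : ℝ)) := by
          simp [Finset.sum_const, mul_comm]
      _ ≤ (m ε : ℝ) * (η / (m ε : ℝ)) := by
          apply mul_le_mul_of_nonneg_right
          · exact_mod_cast hk2
          · positivity
      _ = η := by field_simp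
  linarith [hS1, hS2, h1', hbound]
end

section
/- Let {T_i, i ∈ ℕ*} be i.i.d. mean-1 exponential random variables and suppose the nonnegative sequences (γ^ε_i)_{i≥1} (indexed by ε > 0) and (γ_i)_{i≥1} are summable and satisfy: for some m = m(ε) → ∞, m · sup_{1≤i≤m} |γ^ε_i − γ_i| → 0 as ε → 0, and for every η > 0 and all small ε, ∑_{i>m} γ^ε_i ≤ ∑_{i>m} γ_i + η. Then ∑_{i≥1} γ^ε_i T_i converges to ∑_{i≥1} γ_i T_i in probability as ε → 0. -/
open Filter Set Topology MeasureTheory ProbabilityTheory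

set_option maxHeartbeats 1000000

section helpers

lemma gexp_meas' : Measurable (gammaPDF 1 1) := by
  have := (measurable_gammaPDFReal 1 1).ennreal_ofReal
  exact this

lemma exp_mean' : ∫⁻ x, ENNReal.ofReal x ∂(expMeasure 1) = 1 := by
  rw [expMeasure, gammaMeasure,
    lintegral_withDensity_eq_lintegral_mul _ gexp_meas' ENNReal.measurable_ofReal]
  have h1 : (gammaPDF 1 1 * fun x => ENNReal.ofReal x)
      = (Ioi (0:ℝ)).indicator (fun x => ENNReal.ofReal (Real.exp (-x) * x)) := by
    funext x
    rcases le_or_gt x 0 with hx | hx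
    · rcases lt_or_eq_of_le hx with hx' | hx'
      · simp [Pi.mul_apply, gammaPDF_of_neg hx', indicator_of_notMem (notMem_Ioi.2 hx)]
      · simp [Pi.mul_apply, ← hx', indicator_of_notMem (notMem_Ioi.2 le_rfl)]
    · rw [Pi.mul_apply, gammaPDF_of_nonneg hx.le, indicator_of_mem (mem_Ioi.2 hx)]
      rw [← ENNReal.ofReal_mul (by positivity)]
      norm_num [Real.Gamma_one, mul_comm]
  rw [h1, lintegral_indicator measurableSet_Ioi _]
  have hint : IntegrableOn (fun x => Real.exp (-x) * x ^ ((2:ℝ) - 1)) (Ioi 0) :=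
    Real.GammaIntegral_convergent (by norm_num)
  have hint' : IntegrableOn (fun x => Real.exp (-x) * x) (Ioi 0) := by
    refine hint.congr_fun (fun x hx => ?_) measurableSet_Ioi
    norm_num [Real.rpow_one]
  have hnn : 0 ≤ᵐ[Measure.restrict ℙ (Ioi 0)] fun x => Real.exp (-x) * x := by
    refine ae_restrict_of_ae_restrict_of_subset Ioi_subset_Ici_self ?_
    filter_upwards [ae_restrict_mem measurableSet_Ici] with x hx
    exact mul_nonneg (Real.exp_nonneg _) hx
  rw [← MeasureTheory.ofReal_integral_eq_lintegral_ofReal hint' hnn]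
  have hg : ∫ x in Ioi (0:ℝ), Real.exp (-x) * x = Real.Gamma 2 := by
    rw [Real.Gamma_eq_integral (by norm_num)]
    refine setIntegral_congr_fun measurableSet_Ioi (fun x hx => ?_)
    norm_num [Real.rpow_one]
  rw [hg]
  norm_num [Real.Gamma_two]

lemma exp_Iio_zero : (expMeasure 1) (Iio 0) = 0 := by
  rw [expMeasure, gammaMeasure, withDensity_apply _ measurableSet_Iio]
  rw [setLIntegral_congr_fun measurableSet_Iio (fun x hx => gammaPDF_of_neg hx)]
  simp

variable {Ω : Type*} [MeasurableSpace Ω] (μ : Measure Ω) [IsProbabilityMeasure μ]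
  (T : ℕ → Ω → ℝ) (hTmeas : ∀ i, Measurable (T i))
  (hTlaw : ∀ i, Measure.map (T i) μ = expMeasure 1)

include hTmeas hTlaw

lemma T_mean' (i : ℕ) : ∫⁻ ω, ENNReal.ofReal (T i ω) ∂μ = 1 := by
  have h : ∫⁻ ω, ENNReal.ofReal (T i ω) ∂μ = ∫⁻ x, ENNReal.ofReal x ∂(Measure.map (T i) μ) := by
    rw [lintegral_map ENNReal.measurable_ofReal (hTmeas i)]
  rw [h, hTlaw i]
  exact exp_mean'

omit [IsProbabilityMeasure μ] in
lemma T_nn' (i : ℕ) : ∀ᵐ ω ∂μ, 0 ≤ T i ω := by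
  have h : μ {ω | T i ω < 0} = 0 := by
    have h2 : μ (T i ⁻¹' (Iio 0)) = (Measure.map (T i) μ) (Iio 0) := by
      rw [Measure.map_apply (hTmeas i) measurableSet_Iio]
    simpa [Set.preimage, Set.mem_Iio] using h2.trans (by rw [hTlaw i]; exact exp_Iio_zero)
  filter_upwards [measure_eq_zero_iff_ae_notMem.1 h] with ω hω
  simpa using hω

lemma wsum_lint' (c : ℕ → ℝ) (hc : ∀ i, 0 ≤ c i) :
    ∫⁻ ω, ∑' i, ENNReal.ofReal (c i * T i ω) ∂μ = ∑' i, ENNReal.ofReal (c i) := by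
  simp_rw [fun i ω => ENNReal.ofReal_mul (hc i) (q := T i ω)]
  rw [lintegral_tsum (fun i => ((hTmeas i).ennreal_ofReal.const_mul _).aemeasurable)]
  congr 1
  funext i
  rw [lintegral_const_mul _ (hTmeas i).ennreal_ofReal, T_mean' μ T hTmeas hTlaw i, mul_one]

lemma markov' (c : ℕ → ℝ) (hc : ∀ i, 0 ≤ c i) {d : ℝ} (hd : 0 < d) :
    μ {ω | ENNReal.ofReal d ≤ ∑' i, ENNReal.ofReal (c i * T i ω)}
      ≤ (∑' i, ENNReal.ofReal (c i)) / ENNReal.ofReal d := by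
  have h := meas_ge_le_lintegral_div (μ := μ)
    (Measurable.ennreal_tsum (fun i => ((hTmeas i).const_mul (c i)).ennreal_ofReal)).aemeasurable
    (by simp [ENNReal.ofReal_eq_zero]; linarith) ENNReal.ofReal_ne_top
  rwa [wsum_lint' μ T hTmeas hTlaw c hc] at h

end helpers

/-- if `(T i)` are i.i.d. mean-1 exponential random variables and
the summable nonnegative coefficient sequences `γε ε` approximate `γ` in the
stated sense, then `∑ i, γε ε i * T i → ∑ i, γ i * T i` in probability as `ε → 0`. -/
theorem stmt1
    {Ω : Type*} [MeasurableSpace Ω] (μ : Measure Ω) [IsProbabilityMeasure μ]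
    (T : ℕ → Ω → ℝ)
    (hTmeas : ∀ i, Measurable (T i))
    (hTlaw : ∀ i, Measure.map (T i) μ = expMeasure 1)
    (hTindep : iIndepFun T μ)
    (γ : ℕ → ℝ) (γε : ℝ → ℕ → ℝ) (m : ℝ → ℕ)
    (hγ : ∀ i, 0 ≤ γ i) (hγε : ∀ ε i, 0 ≤ γε ε i)
    (hsum : Summable γ) (hsumε : ∀ ε, Summable (γε ε))
    (hm : Tendsto m (𝓝[>] (0 : ℝ)) atTop)
    (hclose : ∀ η > (0 : ℝ), ∀ᶠ ε in 𝓝[>] (0 : ℝ),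
      ∀ i < m ε, (m ε : ℝ) * |γε ε i - γ i| < η)
    (htail : ∀ η > (0 : ℝ), ∀ᶠ ε in 𝓝[>] (0 : ℝ),
      ∑' i, γε ε (i + m ε) ≤ (∑' i, γ (i + m ε)) + η) :
    TendstoInMeasure μ (fun ε ω => ∑' i, γε ε i * T i ω) (𝓝[>] (0 : ℝ))
      (fun ω => ∑' i, γ i * T i ω) := by
  refine tendstoInMeasure_iff_dist.2 fun δ hδ => ?_
  -- main eventual bound
  have key : ∀ η > (0:ℝ), ∀ᶠ ε in 𝓝[>] (0 : ℝ),
      μ {ω | δ ≤ dist (∑' i, γε ε i * T i ω) (∑' i, γ i * T i ω)}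
        ≤ ENNReal.ofReal (18 * η / δ) := by
    intro η hη
    have hγtail : Tendsto (fun n => ∑' i, γ (i + n)) atTop (𝓝 0) :=
      _root_.tendsto_sum_nat_add γ
    have E3 : ∀ᶠ ε in 𝓝[>] (0:ℝ), ∑' i, γ (i + m ε) < η :=
      (hγtail.comp hm).eventually (Filter.Tendsto.eventually_lt_const hη tendsto_id)
    filter_upwards [hclose η hη, htail η hη, E3, hm.eventually (eventually_ge_atTop 1)]
      with ε h1 h2 h3 hM1
    set M := m ε with hMdef
    have hMpos : (0:ℝ) < M := by exact_mod_cast hM1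
    set cA : ℕ → ℝ := fun i => if i < M then |γε ε i - γ i| else 0 with hcA
    set cB : ℕ → ℝ := fun i => if i < M then 0 else γε ε i with hcB
    set cC : ℕ → ℝ := fun i => if i < M then 0 else γ i with hcC
    have hcAnn : ∀ i, 0 ≤ cA i := fun i => by
      by_cases h : i < M <;> simp [hcA, h, abs_nonneg]
    have hcBnn : ∀ i, 0 ≤ cB i := fun i => by
      by_cases h : i < M <;> simp [hcB, h, hγε ε i]
    have hcCnn : ∀ i, 0 ≤ cC i := fun i => by
      by_cases h : i < M <;> simp [hcC, h, hγ i]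
    have hδ3 : (0:ℝ) < δ/3 := by linarith
    -- a.e. properties
    have hTnn_ae : ∀ᵐ ω ∂μ, ∀ i, 0 ≤ T i ω := ae_all_iff.2 (fun i => T_nn' μ T hTmeas hTlaw i)
    have hfinε : ∀ᵐ ω ∂μ, ∑' i, ENNReal.ofReal (γε ε i * T i ω) < ⊤ := by
      refine ae_lt_top (Measurable.ennreal_tsum fun i => ((hTmeas i).const_mul _).ennreal_ofReal) ?_
      rw [wsum_lint' μ T hTmeas hTlaw _ (hγε ε), ← ENNReal.ofReal_tsum_of_nonneg (hγε ε) (hsumε ε)]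
      exact ENNReal.ofReal_ne_top
    have hfinγ : ∀ᵐ ω ∂μ, ∑' i, ENNReal.ofReal (γ i * T i ω) < ⊤ := by
      refine ae_lt_top (Measurable.ennreal_tsum fun i => ((hTmeas i).const_mul _).ennreal_ofReal) ?_
      rw [wsum_lint' μ T hTmeas hTlaw _ hγ, ← ENNReal.ofReal_tsum_of_nonneg hγ hsum]
      exact ENNReal.ofReal_ne_top
    -- target sets for Markov
    set SA := {ω | ENNReal.ofReal (δ/3) ≤ ∑' i, ENNReal.ofReal (cA i * T i ω)} with hSA
    set SB := {ω | ENNReal.ofReal (δ/3) ≤ ∑' i, ENNReal.ofReal (cB i * T i ω)} with hSB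
    set SC := {ω | ENNReal.ofReal (δ/3) ≤ ∑' i, ENNReal.ofReal (cC i * T i ω)} with hSC
    -- pointwise inclusion a.e.
    have hsub : {ω | δ ≤ dist (∑' i, γε ε i * T i ω) (∑' i, γ i * T i ω)} ≤ᵐ[μ] ((SA ∪ SB ∪ SC : Set Ω)) := by
      filter_upwards [hTnn_ae, hfinε, hfinγ] with ω hnn hf1 hf2 hmem
      have hSe : Summable (fun i => γε ε i * T i ω) := by
        refine (ENNReal.summable_toReal hf1.ne).congr fun i => ?_
        rw [ENNReal.toReal_ofReal (mul_nonneg (hγε ε i) (hnn i))]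
      have hSg : Summable (fun i => γ i * T i ω) := by
        refine (ENNReal.summable_toReal hf2.ne).congr fun i => ?_
        rw [ENNReal.toReal_ofReal (mul_nonneg (hγ i) (hnn i))]
      set A := ∑ i ∈ Finset.range M, |γε ε i - γ i| * T i ω with hA
      set B := ∑' i, γε ε (i+M) * T (i+M) ω with hB
      set C := ∑' i, γ (i+M) * T (i+M) ω with hC
      have hBnn : 0 ≤ B := tsum_nonneg fun i => mul_nonneg (hγε ε _) (hnn _)
      have hCnn : 0 ≤ C := tsum_nonneg fun i => mul_nonneg (hγ _) (hnn _)
      have hd : dist (∑' i, γε ε i * T i ω) (∑' i, γ i * T i ω) ≤ A + B + C := by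
        rw [Real.dist_eq, ← Summable.sum_add_tsum_nat_add M hSe, ← Summable.sum_add_tsum_nat_add M hSg]
        have e1 : (∑ i ∈ Finset.range M, γε ε i * T i ω) + B
            - ((∑ i ∈ Finset.range M, γ i * T i ω) + C)
            = (∑ i ∈ Finset.range M, (γε ε i - γ i) * T i ω) + (B - C) := by
          have e0 : ∑ i ∈ Finset.range M, (γε ε i - γ i) * T i ω
              = (∑ i ∈ Finset.range M, γε ε i * T i ω)
                - ∑ i ∈ Finset.range M, γ i * T i ω := by
            rw [← Finset.sum_sub_distrib]
            exact Finset.sum_congr rfl fun i _ => by ring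
          rw [e0]; ring
        rw [e1]
        refine (abs_add_le _ _).trans ?_
        have e2 : |∑ i ∈ Finset.range M, (γε ε i - γ i) * T i ω| ≤ A := by
          refine (Finset.abs_sum_le_sum_abs _ _).trans ?_
          refine Finset.sum_le_sum fun i _ => ?_
          rw [abs_mul, abs_of_nonneg (hnn i)]
        have e3 : |B - C| ≤ B + C := abs_sub _ _ |>.trans (by
          rw [abs_of_nonneg hBnn, abs_of_nonneg hCnn])
        linarith
      have hmem' : δ ≤ A + B + C := le_trans hmem hd
      have hcase : δ/3 ≤ A ∨ δ/3 ≤ B ∨ δ/3 ≤ C := by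
        by_contra hcon
        push_neg at hcon
        obtain ⟨u, v, w⟩ := hcon
        linarith
      rcases hcase with hA3 | hB3 | hC3
      · left; left
        have hFA : ∑' i, ENNReal.ofReal (cA i * T i ω) = ENNReal.ofReal A := by
          rw [tsum_eq_sum (s := Finset.range M) (fun b hb => by
            have : ¬ b < M := by simpa using hb
            simp [hcA, this])]
          rw [hA, ENNReal.ofReal_sum_of_nonneg
            (fun i _ => mul_nonneg (abs_nonneg _) (hnn i))]
          refine Finset.sum_congr rfl fun i hi => ?_
          have : i < M := Finset.mem_range.1 hi
          simp [hcA, this]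
        show ENNReal.ofReal (δ/3) ≤ _
        rw [hFA]
        exact ENNReal.ofReal_le_ofReal hA3
      · left; right
        have hSeShift : Summable (fun i => γε ε (i+M) * T (i+M) ω) :=
          (summable_nat_add_iff M).2 hSe
        have h1' : ENNReal.ofReal B = ∑' i, ENNReal.ofReal (cB (i+M) * T (i+M) ω) := by
          rw [hB, ENNReal.ofReal_tsum_of_nonneg
            (fun i => mul_nonneg (hγε ε _) (hnn _)) hSeShift]
          refine tsum_congr fun i => ?_
          have : ¬ i + M < M := by omega
          simp [hcB, this]
        have h2' : (∑' i, ENNReal.ofReal (cB (i+M) * T (i+M) ω))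
            ≤ ∑' i, ENNReal.ofReal (cB i * T i ω) :=
          ENNReal.tsum_comp_le_tsum_of_injective
            (f := fun i => i + M) (fun a b h => by simpa using h) _
        show ENNReal.ofReal (δ/3) ≤ _
        calc ENNReal.ofReal (δ/3) ≤ ENNReal.ofReal B := ENNReal.ofReal_le_ofReal hB3
          _ = _ := h1'
          _ ≤ _ := h2'
      · right
        have hSgShift : Summable (fun i => γ (i+M) * T (i+M) ω) :=
          (summable_nat_add_iff M).2 hSg
        have h1' : ENNReal.ofReal C = ∑' i, ENNReal.ofReal (cC (i+M) * T (i+M) ω) := by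
          rw [hC, ENNReal.ofReal_tsum_of_nonneg
            (fun i => mul_nonneg (hγ _) (hnn _)) hSgShift]
          refine tsum_congr fun i => ?_
          have : ¬ i + M < M := by omega
          simp [hcC, this]
        have h2' : (∑' i, ENNReal.ofReal (cC (i+M) * T (i+M) ω))
            ≤ ∑' i, ENNReal.ofReal (cC i * T i ω) :=
          ENNReal.tsum_comp_le_tsum_of_injective
            (f := fun i => i + M) (fun a b h => by simpa using h) _
        show ENNReal.ofReal (δ/3) ≤ _
        calc ENNReal.ofReal (δ/3) ≤ ENNReal.ofReal C := ENNReal.ofReal_le_ofReal hC3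
          _ = _ := h1'
          _ ≤ _ := h2'
    -- coefficient sum bounds
    have hsumA : ∑' i, ENNReal.ofReal (cA i) ≤ ENNReal.ofReal η := by
      rw [tsum_eq_sum (s := Finset.range M) (fun b hb => by
        have : ¬ b < M := by simpa using hb
        simp [hcA, this])]
      rw [← ENNReal.ofReal_sum_of_nonneg (fun i _ => hcAnn i)]
      refine ENNReal.ofReal_le_ofReal ?_
      have step : ∀ i ∈ Finset.range M, cA i ≤ η / M := by
        intro i hi
        have hiM : i < M := Finset.mem_range.1 hi
        have := h1 i hiM
        rw [le_div_iff₀ hMpos]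
        simp only [hcA, if_pos hiM]
        linarith [this]
      calc ∑ i ∈ Finset.range M, cA i ≤ ∑ i ∈ Finset.range M, η / M :=
            Finset.sum_le_sum step
        _ = M * (η / M) := by rw [Finset.sum_const, Finset.card_range, nsmul_eq_mul]
        _ = η := by field_simp
    have hBsum : ∑' i, cB i = ∑' i, γε ε (i + M) := by
      have hsB : Summable cB := Summable.of_nonneg_of_le hcBnn
        (fun i => by by_cases h : i < M <;> simp [hcB, h, hγε ε i]) (hsumε ε)
      rw [← Summable.sum_add_tsum_nat_add M hsB]
      have z1 : ∑ i ∈ Finset.range M, cB i = 0 :=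
        Finset.sum_eq_zero fun i hi => by simp [hcB, Finset.mem_range.1 hi]
      rw [z1, zero_add]
      refine tsum_congr fun i => ?_
      have : ¬ i + M < M := by omega
      simp [hcB, this]
    have hCsum : ∑' i, cC i = ∑' i, γ (i + M) := by
      have hsC : Summable cC := Summable.of_nonneg_of_le hcCnn
        (fun i => by by_cases h : i < M <;> simp [hcC, h, hγ i]) hsum
      rw [← Summable.sum_add_tsum_nat_add M hsC]
      have z1 : ∑ i ∈ Finset.range M, cC i = 0 :=
        Finset.sum_eq_zero fun i hi => by simp [hcC, Finset.mem_range.1 hi]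
      rw [z1, zero_add]
      refine tsum_congr fun i => ?_
      have : ¬ i + M < M := by omega
      simp [hcC, this]
    have hsB : Summable cB := Summable.of_nonneg_of_le hcBnn
      (fun i => by by_cases h : i < M <;> simp [hcB, h, hγε ε i]) (hsumε ε)
    have hsC : Summable cC := Summable.of_nonneg_of_le hcCnn
      (fun i => by by_cases h : i < M <;> simp [hcC, h, hγ i]) hsum
    have hsumB : ∑' i, ENNReal.ofReal (cB i) ≤ ENNReal.ofReal (2*η) := by
      rw [← ENNReal.ofReal_tsum_of_nonneg hcBnn hsB]
      refine ENNReal.ofReal_le_ofReal ?_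
      rw [hBsum]
      linarith [h2, h3.le]
    have hsumC : ∑' i, ENNReal.ofReal (cC i) ≤ ENNReal.ofReal η := by
      rw [← ENNReal.ofReal_tsum_of_nonneg hcCnn hsC]
      refine ENNReal.ofReal_le_ofReal ?_
      rw [hCsum]
      exact h3.le
    -- Markov bounds
    have mkA := markov' μ T hTmeas hTlaw cA hcAnn hδ3
    have mkB := markov' μ T hTmeas hTlaw cB hcBnn hδ3
    have mkC := markov' μ T hTmeas hTlaw cC hcCnn hδ3
    have hdivA : μ SA ≤ ENNReal.ofReal (3*η/δ) := by
      refine mkA.trans ?_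
      refine (ENNReal.div_le_div_right hsumA _).trans ?_
      rw [← ENNReal.ofReal_div_of_pos hδ3]
      refine ENNReal.ofReal_le_ofReal (le_of_eq ?_)
      field_simp
    have hdivB : μ SB ≤ ENNReal.ofReal (6*η/δ) := by
      refine mkB.trans ?_
      refine (ENNReal.div_le_div_right hsumB _).trans ?_
      rw [← ENNReal.ofReal_div_of_pos hδ3]
      refine ENNReal.ofReal_le_ofReal (le_of_eq ?_)
      field_simp
      ring
    have hdivC : μ SC ≤ ENNReal.ofReal (3*η/δ) := by
      refine mkC.trans ?_
      refine (ENNReal.div_le_div_right hsumC _).trans ?_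
      rw [← ENNReal.ofReal_div_of_pos hδ3]
      refine ENNReal.ofReal_le_ofReal (le_of_eq ?_)
      field_simp
    calc μ {ω | δ ≤ dist (∑' i, γε ε i * T i ω) (∑' i, γ i * T i ω)}
        ≤ μ (SA ∪ SB ∪ SC) := measure_mono_ae hsub
      _ ≤ μ (SA ∪ SB) + μ SC := measure_union_le _ _
      _ ≤ (μ SA + μ SB) + μ SC := add_le_add_left (measure_union_le _ _) _
      _ ≤ (ENNReal.ofReal (3*η/δ) + ENNReal.ofReal (6*η/δ)) + ENNReal.ofReal (3*η/δ) :=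
          add_le_add (add_le_add hdivA hdivB) hdivC
      _ ≤ ENNReal.ofReal (18 * η / δ) := by
          rw [← ENNReal.ofReal_add (by positivity) (by positivity),
            ← ENNReal.ofReal_add (by positivity) (by positivity)]
          refine ENNReal.ofReal_le_ofReal ?_
          rw [← add_div, ← add_div]
          gcongr
          linarith
  -- conclude
  rw [ENNReal.tendsto_nhds_zero]
  intro ε0 hε0
  obtain ⟨e, he, hee⟩ : ∃ e : ℝ, 0 < e ∧ ENNReal.ofReal e ≤ ε0 := by
    rcases eq_or_ne ε0 ⊤ with rfl | h
    · exact ⟨1, one_pos, le_top⟩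
    · exact ⟨ε0.toReal, ENNReal.toReal_pos hε0.ne' h, by rw [ENNReal.ofReal_toReal h]⟩
  have hη : (0:ℝ) < δ * e / 18 := by positivity
  filter_upwards [key _ hη] with ε hb
  refine hb.trans (le_trans (ENNReal.ofReal_le_ofReal ?_) hee)
  rw [mul_div_assoc']
  rw [div_le_iff₀ hδ] at *
  ring_nf
  nlinarith
end

section
/- Let 0 < α < 1, 0 ≤ a < α, b with a < b < α < 2b, δ ∈ (0,1), and for i ≥ 2 let c_i = (δi)^a (1 − e^{−(δi)^{1−a}}) and let M_i be independent Poisson random variables with E[M_i] ≤ R^α / (δ^α (i−1)^{1+α}). Then for θ = R^{−b}, the sum ∑_{i=2}^{⌈R/δ⌉} (e^{c_i θ} − 1 − c_i θ) E[M_i] is bounded above by C(α,a,δ) · R^{α−2b} · max(R^{2a−α}, log R) for some constant C(α,a,δ) and all large R; in particular this bound is O(R^{−c'}) for some c' > 0 as R → ∞. -/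
open Filter Topology Real


/-- Bernoulli-type telescoping bound: for `0 < s ≤ 1`,
`∑_{j=1}^M j^(s-1) ≤ M^s / s`. -/
lemma sum_rpow_le_aux (s : ℝ) (hs0 : 0 < s) (hs1 : s ≤ 1) (M : ℕ) :
    ∑ j ∈ Finset.Icc 1 M, (j:ℝ) ^ (s - 1) ≤ (M:ℝ) ^ s / s := by
  have h1 : ∑ j ∈ Finset.Icc 1 M, (j:ℝ) ^ (s - 1)
      = ∑ k ∈ Finset.range M, ((1 + k : ℕ) : ℝ) ^ (s - 1) := by
    rw [← Finset.Ico_add_one_right_eq_Icc, Finset.sum_Ico_eq_sum_range]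
    simp
  rw [h1]
  have key : ∀ k ∈ Finset.range M, ((1 + k : ℕ) : ℝ) ^ (s - 1)
      ≤ ((k + 1 : ℕ) : ℝ) ^ s / s - ((k : ℕ) : ℝ) ^ s / s := by
    intro k _
    have hx0 : (0:ℝ) ≤ (k:ℝ) := Nat.cast_nonneg k
    have hx1 : (0:ℝ) < (k:ℝ) + 1 := by linarith
    -- Bernoulli: (1 + u)^s ≤ 1 + s*u with u = -1/(k+1)
    have hu1 : (-1:ℝ) ≤ -1 / ((k:ℝ) + 1) := by
      rw [neg_div, neg_le_neg_iff]
      rw [div_le_one hx1]; linarith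
    have hb := rpow_one_add_le_one_add_mul_self hu1 hs0.le hs1
    have hbase : (1 + (-1 / ((k:ℝ) + 1))) = (k:ℝ) / ((k:ℝ) + 1) := by
      field_simp
      ring
    rw [hbase] at hb
    -- multiply by (k+1)^s ≥ 0
    have hmul := mul_le_mul_of_nonneg_right hb (Real.rpow_nonneg hx1.le s)
    have hleft : ((k:ℝ) / ((k:ℝ) + 1)) ^ s * ((k:ℝ) + 1) ^ s = (k:ℝ) ^ s := by
      rw [← Real.mul_rpow (by positivity) hx1.le]
      congr 1
      field_simp
    rw [hleft] at hmul
    -- hmul : (k:ℝ)^s ≤ (1 + s * (-1/(k+1))) * (k+1)^s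
    have hpow : ((k:ℝ) + 1) ^ s / ((k:ℝ) + 1) = ((k:ℝ) + 1) ^ (s - 1) := by
      rw [Real.rpow_sub hx1, Real.rpow_one]
    have expand : (1 + s * (-1 / ((k:ℝ) + 1))) * ((k:ℝ) + 1) ^ s
        = ((k:ℝ) + 1) ^ s - s * (((k:ℝ) + 1) ^ s / ((k:ℝ) + 1)) := by
      field_simp; ring
    rw [expand, hpow] at hmul
    -- hmul : k^s ≤ (k+1)^s - s * (k+1)^(s-1)
    have : s * ((k:ℝ) + 1) ^ (s - 1) ≤ ((k:ℝ) + 1) ^ s - (k:ℝ) ^ s := by linarith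
    have hc1 : ((1 + k : ℕ) : ℝ) = (k:ℝ) + 1 := by push_cast; ring
    have hc2 : ((k + 1 : ℕ) : ℝ) = (k:ℝ) + 1 := by push_cast; ring
    rw [hc1, hc2, div_sub_div_same, le_div_iff₀ hs0, mul_comm]
    linarith
  calc ∑ k ∈ Finset.range M, ((1 + k : ℕ) : ℝ) ^ (s - 1)
      ≤ ∑ k ∈ Finset.range M, (((k + 1 : ℕ) : ℝ) ^ s / s - ((k : ℕ) : ℝ) ^ s / s) :=
        Finset.sum_le_sum key
    _ = ((M : ℕ) : ℝ) ^ s / s - ((0 : ℕ) : ℝ) ^ s / s := by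
        exact Finset.sum_range_sub (fun n => ((n:ℝ)) ^ s / s) M
    _ = (M:ℝ) ^ s / s := by
        rw [Nat.cast_zero, Real.zero_rpow hs0.ne', zero_div, sub_zero]

/-- Harmonic bound: `∑_{j=1}^M 1/j ≤ 1 + log M`. -/
lemma sum_inv_le_log_aux (M : ℕ) (hM : 1 ≤ M) :
    ∑ j ∈ Finset.Icc 1 M, ((j:ℝ))⁻¹ ≤ 1 + Real.log M := by
  have h1 : ∑ j ∈ Finset.Icc 1 M, ((j:ℝ))⁻¹
      = ∑ k ∈ Finset.range M, (((1 + k : ℕ) : ℝ))⁻¹ := by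
    rw [← Finset.Ico_add_one_right_eq_Icc, Finset.sum_Ico_eq_sum_range]
    simp
  rw [h1]
  set f : ℕ → ℝ := fun i => if i = 0 then 0 else Real.log i + 1 with hf
  have key : ∀ k ∈ Finset.range M, (((1 + k : ℕ) : ℝ))⁻¹ ≤ f (k + 1) - f k := by
    intro k _
    rcases Nat.eq_zero_or_pos k with rfl | hk
    · simp [hf]
    · have hk0 : (0:ℝ) < (k:ℝ) := by exact_mod_cast hk
      have hk10 : (0:ℝ) < (k:ℝ) + 1 := by linarith
      simp only [hf]
      rw [if_neg (Nat.succ_ne_zero k), if_neg hk.ne']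
      have hlog : Real.log ((k:ℝ) / ((k:ℝ)+1)) ≤ (k:ℝ)/((k:ℝ)+1) - 1 :=
        Real.log_le_sub_one_of_pos (by positivity)
      have hdiv : Real.log ((k:ℝ) / ((k:ℝ)+1)) = Real.log k - Real.log ((k:ℝ)+1) :=
        Real.log_div hk0.ne' hk10.ne'
      have hfrac : (k:ℝ)/((k:ℝ)+1) - 1 = -(1 / ((k:ℝ)+1)) := by field_simp; ring
      rw [hdiv, hfrac] at hlog
      have hcast : (((k : ℕ) + 1 : ℕ) : ℝ) = (k:ℝ) + 1 := by push_cast; ring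
      have hcast2 : ((1 + k : ℕ) : ℝ) = (k:ℝ) + 1 := by push_cast; ring
      rw [hcast, hcast2]
      have : ((k:ℝ) + 1)⁻¹ ≤ Real.log ((k:ℝ)+1) - Real.log k := by
        rw [inv_eq_one_div]; linarith
      linarith
  calc ∑ k ∈ Finset.range M, (((1 + k : ℕ) : ℝ))⁻¹
      ≤ ∑ k ∈ Finset.range M, (f (k+1) - f k) := Finset.sum_le_sum key
    _ = f M - f 0 := Finset.sum_range_sub f M
    _ ≤ 1 + Real.log M := by
        simp only [hf, if_pos rfl, if_neg (by omega : M ≠ 0)]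
        ring_nf
        linarith

lemma key_sum_aux (s δ : ℝ) (hs1 : s < 1) (hδ0 : 0 < δ) (hδ1 : δ < 1) :
    ∃ K > (0:ℝ), ∀ R : ℝ, 3 ≤ R → ∀ M : ℕ, 1 ≤ M → (M:ℝ) ≤ R / δ →
      ∑ j ∈ Finset.Icc 1 M, (j:ℝ) ^ (s - 1) ≤ K * max (R ^ s) (Real.log R) := by
  have he3 : Real.exp 1 ≤ 3 := by
    have := Real.exp_one_lt_d9
    linarith
  rcases le_or_gt s 0 with hs | hs
  · refine ⟨2 - Real.log δ, by nlinarith [Real.log_nonpos hδ0.le hδ1.le], ?_⟩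
    intro R hR3 M hM hMle
    have hR0 : (0:ℝ) < R := by linarith
    have hlogR : 1 ≤ Real.log R := by
      rw [Real.le_log_iff_exp_le hR0]; linarith
    have hM0 : (0:ℝ) < (M:ℝ) := by exact_mod_cast hM
    have hstep : ∑ j ∈ Finset.Icc 1 M, (j:ℝ) ^ (s - 1)
        ≤ ∑ j ∈ Finset.Icc 1 M, ((j:ℝ))⁻¹ := by
      apply Finset.sum_le_sum
      intro j hj
      have hj1 : (1:ℝ) ≤ (j:ℝ) := by
        exact_mod_cast (Finset.mem_Icc.mp hj).1
      calc (j:ℝ) ^ (s - 1) ≤ (j:ℝ) ^ (-1 : ℝ) :=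
            Real.rpow_le_rpow_of_exponent_le hj1 (by linarith)
        _ = ((j:ℝ))⁻¹ := by rw [Real.rpow_neg_one]
    have hlogM : Real.log M ≤ Real.log R - Real.log δ := by
      rw [← Real.log_div hR0.ne' hδ0.ne']
      exact Real.log_le_log hM0 hMle
    have hld : 0 ≤ -Real.log δ := by
      simpa using Real.log_nonpos hδ0.le hδ1.le
    calc ∑ j ∈ Finset.Icc 1 M, (j:ℝ) ^ (s - 1)
        ≤ 1 + Real.log M := hstep.trans (sum_inv_le_log_aux M hM)
      _ ≤ 1 + Real.log R - Real.log δ := by linarith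
      _ ≤ (2 - Real.log δ) * Real.log R := by nlinarith
      _ ≤ (2 - Real.log δ) * max (R ^ s) (Real.log R) := by
          have : (0:ℝ) < 2 - Real.log δ := by nlinarith
          exact mul_le_mul_of_nonneg_left (le_max_right _ _) this.le
  · refine ⟨1 / (δ ^ s * s), by positivity, ?_⟩
    intro R hR3 M hM hMle
    have hR0 : (0:ℝ) < R := by linarith
    have h1 : ∑ j ∈ Finset.Icc 1 M, (j:ℝ) ^ (s - 1) ≤ (M:ℝ) ^ s / s :=
      sum_rpow_le_aux s hs hs1.le M
    have h2 : (M:ℝ) ^ s ≤ (R / δ) ^ s :=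
      Real.rpow_le_rpow (Nat.cast_nonneg M) hMle hs.le
    have h3 : (R / δ) ^ s = R ^ s / δ ^ s := Real.div_rpow hR0.le hδ0.le s
    calc ∑ j ∈ Finset.Icc 1 M, (j:ℝ) ^ (s - 1)
        ≤ (R ^ s / δ ^ s) / s := by
          rw [← h3]
          exact h1.trans (by gcongr)
      _ = (1 / (δ ^ s * s)) * R ^ s := by field_simp
      _ ≤ (1 / (δ ^ s * s)) * max (R ^ s) (Real.log R) := by
          have : (0:ℝ) < 1 / (δ ^ s * s) := by positivity
          exact mul_le_mul_of_nonneg_left (le_max_left _ _) this.le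

set_option maxHeartbeats 1000000 in
/-- with `0 ≤ a < b < α < 2b`, `δ ∈ (0,1)`,
`c_i = (δi)^a (1 − e^{−(δi)^{1−a}})`, `θ = R^{−b}`, and any nonnegative weights
`e i ≤ R^α/(δ^α (i−1)^{1+α})` (the bound on `E[M_i]`), the sum
`∑_{i=2}^{⌊R/δ⌋} (e^{c_i θ} − 1 − c_i θ) e i` is bounded by
`C · R^{α−2b} · max(R^{2a−α}, log R)` for large `R`, and this bound is
`O(R^{−c'})` for some `c' > 0`. -/
theorem stmt7 (α a b δ : ℝ)
    (hα0 : 0 < α) (hα1 : α < 1) (ha0 : 0 ≤ a)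
    (hab : a < b) (hbα : b < α) (hα2b : α < 2 * b)
    (hδ0 : 0 < δ) (hδ1 : δ < 1) :
    ∃ C > (0:ℝ), ∃ c' > (0:ℝ), ∃ C' > (0:ℝ), ∀ᶠ R in atTop,
      (∀ e : ℕ → ℝ, (∀ i, 0 ≤ e i) →
        (∀ i : ℕ, 2 ≤ i → e i ≤ R ^ α / (δ ^ α * ((i:ℝ) - 1) ^ (1 + α))) →
        ∑ i ∈ Finset.Icc 2 ⌊R / δ⌋₊,
            (Real.exp ((δ * i) ^ a * (1 - Real.exp (-((δ * i) ^ (1 - a)))) * R ^ (-b))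
              - 1
              - (δ * i) ^ a * (1 - Real.exp (-((δ * i) ^ (1 - a)))) * R ^ (-b)) * e i
          ≤ C * R ^ (α - 2 * b) * max (R ^ (2 * a - α)) (Real.log R)) ∧
      C * R ^ (α - 2 * b) * max (R ^ (2 * a - α)) (Real.log R) ≤ C' * R ^ (-c') := by
  obtain ⟨K, hK0, hK⟩ := key_sum_aux (2*a - α) δ (by linarith) hδ0 hδ1
  set p : ℝ := (2*b - α)/2 with hp
  have hp0 : 0 < p := by rw [hp]; linarith
  set C : ℝ := 2^(2*a) * δ^(2*a-α) * K with hC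
  have hC0 : 0 < C := by rw [hC]; positivity
  refine ⟨C, hC0, min (2*(b-a)) p, lt_min (by linarith) hp0, C + C * (1/p),
    by positivity, ?_⟩
  filter_upwards [eventually_ge_atTop (3:ℝ)] with R hR3
  have hR0 : (0:ℝ) < R := by linarith
  have hR1 : (1:ℝ) ≤ R := by linarith
  have he3 : Real.exp 1 ≤ 3 := by
    have := Real.exp_one_lt_d9; linarith
  have hlogR : 1 ≤ Real.log R := by
    rw [Real.le_log_iff_exp_le hR0]; linarith
  set N := ⌊R / δ⌋₊ with hN
  have hRRδ : R ≤ R / δ := by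
    rw [le_div_iff₀ hδ0]; nlinarith
  have hN2 : 2 ≤ N := by
    rw [hN]
    apply Nat.le_floor
    push_cast
    linarith
  have hNle : (N:ℝ) ≤ R / δ := Nat.floor_le (by positivity)
  set D : ℝ := 2^(2*a) * δ^(2*a-α) * R^(α-2*b) with hD
  have hRab0 : 0 < R^(α-2*b) := Real.rpow_pos_of_pos hR0 _
  have hD0 : 0 < D := by rw [hD]; positivity
  constructor
  · intro e he0 hebnd
    have step : ∀ i ∈ Finset.Icc 2 N,
        (Real.exp ((δ * i) ^ a * (1 - Real.exp (-((δ * i) ^ (1 - a)))) * R ^ (-b))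
          - 1 - (δ * i) ^ a * (1 - Real.exp (-((δ * i) ^ (1 - a)))) * R ^ (-b)) * e i
        ≤ D * ((i:ℝ)-1)^(2*a-α-1) := by
      intro i hi
      obtain ⟨hi2, hiN⟩ := Finset.mem_Icc.mp hi
      have hi2R : (2:ℝ) ≤ (i:ℝ) := by exact_mod_cast hi2
      have hi1 : (0:ℝ) < (i:ℝ) - 1 := by linarith
      have hδi0 : (0:ℝ) ≤ δ * i := by positivity
      have hδiR : δ * i ≤ R := by
        have h1 : (i:ℝ) ≤ (N:ℝ) := by exact_mod_cast hiN
        calc δ * i ≤ δ * (R/δ) := by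
              exact mul_le_mul_of_nonneg_left (h1.trans hNle) hδ0.le
          _ = R := by field_simp
      set y := (δ * i)^(1-a) with hy
      have hy0 : 0 ≤ y := Real.rpow_nonneg hδi0 _
      have hE1 : Real.exp (-y) ≤ 1 := Real.exp_le_one_iff.mpr (by linarith)
      have hE0 : 0 < Real.exp (-y) := Real.exp_pos _
      have hA0 : 0 ≤ (δ*i)^a := Real.rpow_nonneg hδi0 a
      set c := (δ*(i:ℝ))^a * (1 - Real.exp (-y)) with hc
      have hc0 : 0 ≤ c := by rw [hc]; exact mul_nonneg hA0 (by linarith)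
      have hcle : c ≤ (δ*i)^a := by rw [hc]; nlinarith
      set x := c * R^(-b) with hx
      have hRb0 : 0 ≤ R^(-b) := Real.rpow_nonneg hR0.le _
      have hx0 : 0 ≤ x := mul_nonneg hc0 hRb0
      have hxle : x ≤ (δ*i)^a * R^(-b) := mul_le_mul_of_nonneg_right hcle hRb0
      have hδia : (δ*i)^a ≤ R^a := Real.rpow_le_rpow hδi0 hδiR ha0
      have hx1 : x ≤ 1 := by
        have h1 : x ≤ R^a * R^(-b) :=
          hxle.trans (mul_le_mul_of_nonneg_right hδia hRb0)
        have h2 : R^a * R^(-b) = R^(a-b) := by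
          rw [← Real.rpow_add hR0]; ring_nf
        rw [h2] at h1
        exact h1.trans (Real.rpow_le_one_of_one_le_of_nonpos hR1 (by linarith))
      have hexp : Real.exp x - 1 - x ≤ x^2 := by
        have hb := Real.exp_bound' hx0 hx1 (n := 2) (by norm_num)
        norm_num [Finset.sum_range_succ] at hb
        nlinarith [sq_nonneg x]
      have hx2 : x^2 ≤ (δ*i)^(2*a) * R^(-(2*b)) := by
        calc x^2 ≤ ((δ*i)^a * R^(-b))^2 := pow_le_pow_left₀ hx0 hxle 2
          _ = (δ*i)^(2*a) * R^(-(2*b)) := by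
              rw [mul_pow, ← Real.rpow_natCast ((δ*(i:ℝ))^a) 2,
                  ← Real.rpow_natCast (R^(-b)) 2,
                  ← Real.rpow_mul hδi0, ← Real.rpow_mul hR0.le]
              push_cast
              rw [show a*(2:ℝ) = 2*a by ring, show -b*(2:ℝ) = -(2*b) by ring]
      have hQ0 : 0 < R^α/(δ^α*((i:ℝ)-1)^(1+α)) :=
        div_pos (Real.rpow_pos_of_pos hR0 α)
          (mul_pos (Real.rpow_pos_of_pos hδ0 α) (Real.rpow_pos_of_pos hi1 _))
      have hB0 : 0 ≤ (δ*(i:ℝ))^(2*a) * R^(-(2*b)) :=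
        mul_nonneg (Real.rpow_nonneg hδi0 _) (Real.rpow_nonneg hR0.le _)
      have hterm1 : (Real.exp x - 1 - x) * e i
          ≤ ((δ*(i:ℝ))^(2*a) * R^(-(2*b))) * (R^α/(δ^α*((i:ℝ)-1)^(1+α))) :=
        mul_le_mul (hexp.trans hx2) (hebnd i hi2) (he0 i) hB0
      have hbase : (δ*(i:ℝ))^(2*a) ≤ 2^(2*a) * δ^(2*a) * ((i:ℝ)-1)^(2*a) := by
        have h1 : δ * i ≤ 2*δ*((i:ℝ)-1) := by nlinarith
        calc (δ*(i:ℝ))^(2*a) ≤ (2*δ*((i:ℝ)-1))^(2*a) :=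
              Real.rpow_le_rpow hδi0 h1 (by linarith)
          _ = 2^(2*a) * δ^(2*a) * ((i:ℝ)-1)^(2*a) := by
              rw [Real.mul_rpow (by positivity) hi1.le,
                  Real.mul_rpow (by norm_num) hδ0.le]
      have hfac0 : 0 ≤ R^(-(2*b)) * (R^α/(δ^α*((i:ℝ)-1)^(1+α))) :=
        mul_nonneg (Real.rpow_nonneg hR0.le _) hQ0.le
      have heq : (2^(2*a) * δ^(2*a) * ((i:ℝ)-1)^(2*a))
            * (R^(-(2*b)) * (R^α/(δ^α*((i:ℝ)-1)^(1+α))))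
          = D * ((i:ℝ)-1)^(2*a-α-1) := by
        have n1 : δ^(α:ℝ) ≠ 0 := (Real.rpow_pos_of_pos hδ0 α).ne'
        have n2 : R^(2*b) ≠ 0 := (Real.rpow_pos_of_pos hR0 _).ne'
        have n3 : ((i:ℝ)-1)^(1+α) ≠ 0 := (Real.rpow_pos_of_pos hi1 _).ne'
        rw [hD, Real.rpow_sub hδ0 (2*a) α, Real.rpow_sub hR0 α (2*b),
            show (2*a-α-1:ℝ) = 2*a - (1+α) by ring,
            Real.rpow_sub hi1 (2*a) (1+α), Real.rpow_neg hR0.le (2*b)]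
        field_simp
      calc (Real.exp x - 1 - x) * e i
          ≤ ((δ*(i:ℝ))^(2*a) * R^(-(2*b))) * (R^α/(δ^α*((i:ℝ)-1)^(1+α))) := hterm1
        _ = (δ*(i:ℝ))^(2*a) * (R^(-(2*b)) * (R^α/(δ^α*((i:ℝ)-1)^(1+α)))) := by ring
        _ ≤ (2^(2*a) * δ^(2*a) * ((i:ℝ)-1)^(2*a))
            * (R^(-(2*b)) * (R^α/(δ^α*((i:ℝ)-1)^(1+α)))) :=
              mul_le_mul_of_nonneg_right hbase hfac0
        _ = D * ((i:ℝ)-1)^(2*a-α-1) := heq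
    have hre : ∑ i ∈ Finset.Icc 2 N, ((i:ℝ)-1)^(2*a-α-1)
        = ∑ j ∈ Finset.Icc 1 (N-1), (j:ℝ)^(2*a-α-1) := by
      rw [← Finset.Ico_add_one_right_eq_Icc, ← Finset.Ico_add_one_right_eq_Icc, Finset.sum_Ico_eq_sum_range,
          Finset.sum_Ico_eq_sum_range]
      rw [show N + 1 - 2 = N - 1 + 1 - 1 by omega]
      apply Finset.sum_congr rfl
      intro k _
      have : ((2 + k : ℕ) : ℝ) - 1 = ((1 + k : ℕ) : ℝ) := by push_cast; ring
      rw [this]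
    have hkey := hK R hR3 (N-1) (by omega)
      (by
        have h1 : ((N-1 : ℕ):ℝ) ≤ (N:ℝ) := by
          exact_mod_cast Nat.cast_le.mpr (Nat.sub_le N 1)
        linarith)
    calc ∑ i ∈ Finset.Icc 2 N,
            (Real.exp ((δ * i) ^ a * (1 - Real.exp (-((δ * i) ^ (1 - a)))) * R ^ (-b))
              - 1 - (δ * i) ^ a * (1 - Real.exp (-((δ * i) ^ (1 - a)))) * R ^ (-b)) * e i
        ≤ ∑ i ∈ Finset.Icc 2 N, D * ((i:ℝ)-1)^(2*a-α-1) := Finset.sum_le_sum step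
      _ = D * ∑ i ∈ Finset.Icc 2 N, ((i:ℝ)-1)^(2*a-α-1) := by
          rw [Finset.mul_sum]
      _ = D * ∑ j ∈ Finset.Icc 1 (N-1), (j:ℝ)^(2*a-α-1) := by rw [hre]
      _ ≤ D * (K * max (R^(2*a-α)) (Real.log R)) := by
          exact mul_le_mul_of_nonneg_left hkey hD0.le
      _ = C * R^(α-2*b) * max (R^(2*a-α)) (Real.log R) := by
          rw [hD, hC]; ring
  · have hmaxle : max (R^(2*a-α)) (Real.log R) ≤ R^(2*a-α) + Real.log R :=
      max_le (le_add_of_nonneg_right (by linarith))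
        (le_add_of_nonneg_left (Real.rpow_nonneg hR0.le _))
    have hlogle : Real.log R ≤ R^p / p := by
      have h1 : Real.log (R^p) ≤ R^p - 1 :=
        Real.log_le_sub_one_of_pos (Real.rpow_pos_of_pos hR0 p)
      rw [Real.log_rpow hR0] at h1
      rw [le_div_iff₀ hp0]
      nlinarith [Real.rpow_pos_of_pos hR0 p]
    have hc'1 : min (2*(b-a)) p ≤ 2*(b-a) := min_le_left _ _
    have hc'2 : min (2*(b-a)) p ≤ p := min_le_right _ _
    have ht1 : R^(α-2*b) * R^(2*a-α) ≤ R^(-(min (2*(b-a)) p)) := by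
      rw [← Real.rpow_add hR0]
      exact Real.rpow_le_rpow_of_exponent_le hR1 (by linarith)
    have ht2 : R^(α-2*b) * Real.log R ≤ (1/p) * R^(-(min (2*(b-a)) p)) := by
      calc R^(α-2*b) * Real.log R ≤ R^(α-2*b) * (R^p/p) :=
            mul_le_mul_of_nonneg_left hlogle hRab0.le
        _ = (1/p) * R^((α-2*b)+p) := by
            rw [Real.rpow_add hR0]; field_simp
        _ ≤ (1/p) * R^(-(min (2*(b-a)) p)) := by
            apply mul_le_mul_of_nonneg_left _ (by positivity)
            apply Real.rpow_le_rpow_of_exponent_le hR1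
            rw [hp]; rw [hp] at hc'2; linarith
    have hm : C * R^(α-2*b) * max (R^(2*a-α)) (Real.log R)
        ≤ C * (R^(α-2*b) * R^(2*a-α)) + C * (R^(α-2*b) * Real.log R) := by
      have := mul_le_mul_of_nonneg_left hmaxle (mul_nonneg hC0.le hRab0.le)
      calc C * R^(α-2*b) * max (R^(2*a-α)) (Real.log R)
          ≤ C * R^(α-2*b) * (R^(2*a-α) + Real.log R) := this
        _ = C * (R^(α-2*b) * R^(2*a-α)) + C * (R^(α-2*b) * Real.log R) := by ring
    have h1 := mul_le_mul_of_nonneg_left ht1 hC0.le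
    have h2 := mul_le_mul_of_nonneg_left ht2 hC0.le
    calc C * R^(α-2*b) * max (R^(2*a-α)) (Real.log R)
        ≤ C * R^(-(min (2*(b-a)) p)) + C * ((1/p) * R^(-(min (2*(b-a)) p))) := by
          linarith
      _ = (C + C * (1/p)) * R^(-(min (2*(b-a)) p)) := by ring
end
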